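/- Let φ_n be, for a finite set of distinct reals x_0, …, x_n, the permutation of {0,…,n} making (x_{φ_n(i)})_i strictly increasing. Let Y_0, …, Y_n ⊆ ℝ be closed sets, each bounded below, and define S_{-1} = a and S_i = min{ y ∈ Y_{φ_n(i)} : y ≥ S_{i-1} } for 0 ≤ i ≤ n (assuming each set {y ∈ Y_{φ_n(i)} : y ≥ S_{i-1}} is nonempty). Then any increasing function f : ℝ → [a, b] with f(x_i) ∈ Y_i for all 0 ≤ i ≤ n satisfies f(x_{φ_n(i)}) ≥ S_i for all i; in particular S_n ≤ b. -/

import Mathlib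

/-- Greedy lower bound in the proof of Theorem 2.7: order distinct sites
`x₀, …, x_n` increasingly via the permutation `φ`, and define `S₀ = a` and
`S_{i+1} = min{y ∈ Y_{φ(i)} : y ≥ S_i}`. Then every increasing
`f : ℝ → [a, b]` with `f(x_i) ∈ Y_i` for all `i` satisfies
`S_{i+1} ≤ f(x_{φ(i)})` for all `i`; in particular `S_{n+1} ≤ b`. -/
theorem interpolation_percolation_greedy_lower_bound
    (n : ℕ) (a b : ℝ) (hab : a < b)
    (x : Fin (n + 1) → ℝ) (hx : Function.Injective x)
    (φ : Equiv.Perm (Fin (n + 1))) (hφ : StrictMono (fun i => x (φ i)))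
    (Y : Fin (n + 1) → Set ℝ)
    (hclosed : ∀ i, IsClosed (Y i)) (hbdd : ∀ i, BddBelow (Y i))
    (S : ℕ → ℝ) (hS0 : S 0 = a)
    (hS : ∀ i : Fin (n + 1), IsLeast {y | y ∈ Y (φ i) ∧ S i ≤ y} (S (i + 1))) :
    ∀ f : ℝ → ℝ, Monotone f → (∀ t : ℝ, f t ∈ Set.Icc a b) →
      (∀ i : Fin (n + 1), f (x i) ∈ Y i) →
      (∀ i : Fin (n + 1), S ((i : ℕ) + 1) ≤ f (x (φ i))) ∧ S (n + 1) ≤ b := by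
  intro f hf hfab hfY
  have key : ∀ i : Fin (n + 1), S ((i : ℕ) + 1) ≤ f (x (φ i)) := by
    intro i
    induction i using Fin.induction with
    | zero =>
      refine (hS 0).2 ⟨hfY (φ 0), ?_⟩
      simp only [Fin.val_zero, hS0]
      exact (hfab (x (φ 0))).1
    | succ j ih =>
      refine (hS j.succ).2 ⟨hfY (φ j.succ), ?_⟩
      have : S ((j : ℕ) + 1) ≤ f (x (φ j.succ)) :=
        le_trans ih (hf (le_of_lt (hφ (show Fin.castSucc j < j.succ from Fin.castSucc_lt_succ))))
      simpa using this
  refine ⟨key, ?_⟩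
  have := key (Fin.last n)
  simp only [Fin.val_last] at this
  exact le_trans this (hfab _).2
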